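/- Divergence theorem for differentiable vector fields (special case used): if v : ℝⁿ → ℝⁿ is continuous with compact support and differentiable at every point, then the Gauge (Pfeffer) integral of div v over ℝⁿ (equivalently over any cell containing the support) is zero. -/
import Mathlib


open BoxIntegral

/-- A continuous function vanishing outside a box vanishes at points whose `i`-th coordinate
is on (or beyond) the upper or lower face of the box. -/
lemma aux_vanish {n : ℕ} (v : (Fin n → ℝ) → (Fin n → ℝ))
    (hc : Continuous v) (I : Box (Fin n)) (hI : tsupport v ⊆ Box.Icc I)
    (i : Fin n) (y : Fin n → ℝ) (hy : y i = I.upper i ∨ y i = I.lower i) :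
    v y = 0 := by
  have hclosed : IsClosed {x : Fin n → ℝ | v x = 0} :=
    isClosed_eq hc continuous_const
  -- direction of approach
  rcases hy with hy | hy
  · -- approach from above in coordinate i
    have hsub : {x : Fin n → ℝ | I.upper i < x i} ⊆ {x | v x = 0} := by
      intro x hx
      refine image_eq_zero_of_notMem_tsupport fun hxs => ?_
      have := (hI hxs).2 i
      exact absurd this (not_le.2 hx)
    have hmem : y ∈ closure {x : Fin n → ℝ | I.upper i < x i} := by
      have h1 : Filter.Tendsto (fun t : ℝ => y + t • (Pi.single i 1 : Fin n → ℝ))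
          (nhdsWithin 0 (Set.Ioi 0)) (nhds y) := by
        have : Filter.Tendsto (fun t : ℝ => y + t • (Pi.single i 1 : Fin n → ℝ)) (nhds 0) (nhds y) := by
          have hcont : Continuous (fun t : ℝ => y + t • (Pi.single i 1 : Fin n → ℝ)) := by
            continuity
          simpa using hcont.tendsto 0
        exact this.mono_left nhdsWithin_le_nhds
      refine mem_closure_of_tendsto h1 ?_
      filter_upwards [self_mem_nhdsWithin] with t ht
      simp only [Set.mem_setOf_eq, Pi.add_apply, Pi.smul_apply, Pi.single_eq_same, smul_eq_mul,
        mul_one, hy]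
      exact lt_add_of_pos_right _ ht
    exact hclosed.closure_subset ((closure_mono hsub) hmem)
  · have hsub : {x : Fin n → ℝ | x i < I.lower i} ⊆ {x | v x = 0} := by
      intro x hx
      refine image_eq_zero_of_notMem_tsupport fun hxs => ?_
      have := (hI hxs).1 i
      exact absurd this (not_le.2 hx)
    have hmem : y ∈ closure {x : Fin n → ℝ | x i < I.lower i} := by
      have h1 : Filter.Tendsto (fun t : ℝ => y + t • (Pi.single i 1 : Fin n → ℝ))
          (nhdsWithin 0 (Set.Iio 0)) (nhds y) := by
        have : Filter.Tendsto (fun t : ℝ => y + t • (Pi.single i 1 : Fin n → ℝ)) (nhds 0) (nhds y) := by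
          have hcont : Continuous (fun t : ℝ => y + t • (Pi.single i 1 : Fin n → ℝ)) := by
            continuity
          simpa using hcont.tendsto 0
        exact this.mono_left nhdsWithin_le_nhds
      refine mem_closure_of_tendsto h1 ?_
      filter_upwards [self_mem_nhdsWithin] with t ht
      simp only [Set.mem_setOf_eq, Pi.add_apply, Pi.smul_apply, Pi.single_eq_same, smul_eq_mul,
        mul_one, hy]
      exact add_lt_of_neg_right _ ht
    exact hclosed.closure_subset ((closure_mono hsub) hmem)

/-- Divergence theorem for pointwise differentiable vector fields (special case): if
`v : ℝⁿ → ℝⁿ` is continuous with compact support and differentiable at every point, then the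
gauge (Henstock–Kurzweil/Pfeffer type, here `GP`) integral of `div v` over any cell containing
the support of `v` is zero. -/
theorem stmt_16 {n : ℕ} (v : (Fin n → ℝ) → (Fin n → ℝ))
    (hc : Continuous v) (hsupp : HasCompactSupport v)
    (hdiff : ∀ x, DifferentiableAt ℝ v x)
    (I : Box (Fin n)) (hI : tsupport v ⊆ Box.Icc I) :
    HasIntegral I IntegrationParams.GP
      (fun x => ∑ j : Fin n, fderiv ℝ v x (Pi.single j 1) j)
      (BoxAdditiveMap.volume : _ →ᵇᵃ (ℝ →L[ℝ] ℝ)) 0 := by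
  cases n with
  | zero =>
      simpa using (hasIntegral_zero (I := I) (l := IntegrationParams.GP)
        (vol := (BoxAdditiveMap.volume : _ →ᵇᵃ (ℝ →L[ℝ] ℝ))) (E := ℝ))
  | succ m =>
      have key := hasIntegral_GP_divergence_of_forall_hasDerivWithinAt (I := I) v
        (fun x => fderiv ℝ v x) ∅ Set.countable_empty
        (fun x hx => absurd hx (Set.notMem_empty x))
        (fun x _ => ((hdiff x).hasFDerivAt).hasFDerivWithinAt)
      convert key using 1
      symm
      rw [Finset.sum_eq_zero]
      intro i _
      have h1 : (fun x => v (i.insertNth (I.upper i) x) i) = fun _ => (0 : ℝ) := by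
        funext x
        have := aux_vanish v hc I hI i (i.insertNth (I.upper i) x)
          (Or.inl (by simp))
        simp [this]
      have h2 : (fun x => v (i.insertNth (I.lower i) x) i) = fun _ => (0 : ℝ) := by
        funext x
        have := aux_vanish v hc I hI i (i.insertNth (I.lower i) x)
          (Or.inr (by simp))
        simp [this]
      rw [h1, h2]
      simp [integral_zero]
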